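/- Let γ₀, k : ℝ → ℝ be continuous with γ₀(x) > -2 for all x, k not identically zero, k(x) → 0 as |x| → ∞, and γ₀(x) → 0 as |x| → ∞. Then there exists T ∈ ℝ with T ≠ 0 such that γ₀(x) + t·k(x) > -2 for all x when |t| < |T|, and γ₀(x₀) + T·k(x₀) = -2 for some x₀ ∈ ℝ. -/

import Mathlib

open Filter

theorem geodesic_incompleteness (γ₀ k : ℝ → ℝ)
    (hγc : Continuous γ₀) (hkc : Continuous k)
    (hγ : ∀ x, γ₀ x > -2)
    (hk0 : ¬ ∀ x, k x = 0)
    (hktop : Tendsto k atTop (nhds 0)) (hkbot : Tendsto k atBot (nhds 0))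
    (hγtop : Tendsto γ₀ atTop (nhds 0)) (hγbot : Tendsto γ₀ atBot (nhds 0)) :
    ∃ T : ℝ, T ≠ 0 ∧
      (∀ t : ℝ, |t| < |T| → ∀ x, γ₀ x + t * k x > -2) ∧
      ∃ x₀, γ₀ x₀ + T * k x₀ = -2 := by
  push_neg at hk0
  obtain ⟨x₁, hx₁⟩ := hk0
  have hden : ∀ x, (0:ℝ) < 2 + γ₀ x := fun x => by linarith [hγ x]
  set ψ : ℝ → ℝ := fun x => |k x| / (2 + γ₀ x) with hψdef
  have hψc : Continuous ψ := hkc.abs.div (continuous_const.add hγc) (fun x => (hden x).ne')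
  have hψpos : 0 < ψ x₁ := div_pos (abs_pos.2 hx₁) (hden x₁)
  set m₁ := ψ x₁ with hm₁
  -- tails
  have hkt : ∀ᶠ x in atTop, |k x| < m₁ / 2 := by
    have := Metric.tendsto_nhds.1 hktop (m₁/2) (by positivity)
    simpa [Real.dist_eq] using this
  have hkb : ∀ᶠ x in atBot, |k x| < m₁ / 2 := by
    have := Metric.tendsto_nhds.1 hkbot (m₁/2) (by positivity)
    simpa [Real.dist_eq] using this
  have hgt : ∀ᶠ x in atTop, |γ₀ x| < 1 := by
    have := Metric.tendsto_nhds.1 hγtop 1 one_pos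
    simpa [Real.dist_eq] using this
  have hgb : ∀ᶠ x in atBot, |γ₀ x| < 1 := by
    have := Metric.tendsto_nhds.1 hγbot 1 one_pos
    simpa [Real.dist_eq] using this
  obtain ⟨A, hA⟩ := (hkt.and hgt).exists_forall_of_atTop
  obtain ⟨B, hB⟩ := (hkb.and hgb).exists_forall_of_atBot
  set a := min B x₁ with ha
  set b := max A x₁ with hb
  have hx₁mem : x₁ ∈ Set.Icc a b := ⟨min_le_right _ _, le_max_right _ _⟩
  -- small outside
  have hout : ∀ x, x ∉ Set.Icc a b → ψ x ≤ m₁ / 2 := by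
    intro x hx
    have h : |k x| < m₁ / 2 ∧ |γ₀ x| < 1 := by
      rcases not_and_or.1 (Set.mem_Icc.not.1 hx) with h | h
      · push_neg at h
        exact hB x (le_of_lt (lt_of_lt_of_le h (min_le_left _ _)))
      · push_neg at h
        exact hA x (le_of_lt (lt_of_le_of_lt (le_max_left _ _) h))
    have h1 : (1:ℝ) ≤ 2 + γ₀ x := by
      have := abs_lt.1 h.2
      linarith [this.1]
    calc ψ x = |k x| / (2 + γ₀ x) := rfl
      _ ≤ (m₁/2) / 1 := by
          apply div_le_div₀ (by positivity) h.1.le one_pos h1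
      _ = m₁ / 2 := by ring
  -- max on compact
  obtain ⟨x₀, hx₀mem, hx₀max⟩ :=
    isCompact_Icc.exists_isMaxOn ⟨x₁, hx₁mem⟩ hψc.continuousOn
  have hmax : ∀ x, ψ x ≤ ψ x₀ := by
    intro x
    by_cases hx : x ∈ Set.Icc a b
    · exact hx₀max hx
    · calc ψ x ≤ m₁ / 2 := hout x hx
        _ ≤ m₁ := by linarith
        _ ≤ ψ x₀ := hx₀max hx₁mem
  have hψ₀pos : 0 < ψ x₀ := lt_of_lt_of_le hψpos (hx₀max hx₁mem)
  have hk₀ : k x₀ ≠ 0 := by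
    intro h
    rw [hψdef] at hψ₀pos
    simp only [h, abs_zero, zero_div] at hψ₀pos
    exact lt_irrefl 0 hψ₀pos
  refine ⟨-(2 + γ₀ x₀) / k x₀, ?_, ?_, x₀, ?_⟩
  · exact div_ne_zero (by linarith [hden x₀]) hk₀
  · intro t ht x
    have hT : |(-(2 + γ₀ x₀) / k x₀)| = (2 + γ₀ x₀) / |k x₀| := by
      rw [abs_div, abs_neg, abs_of_pos (hden x₀)]
    rw [hT] at ht
    have key : |t * k x| < 2 + γ₀ x := by
      by_cases hkx : k x = 0
      · simpa [hkx] using hden x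
      · have h1 : |t| * |k x| < ((2 + γ₀ x₀) / |k x₀|) * |k x| :=
          mul_lt_mul_of_pos_right ht (abs_pos.2 hkx)
        have h2 : |k x| * (2 + γ₀ x₀) ≤ |k x₀| * (2 + γ₀ x) := by
          have := hmax x
          rw [hψdef, div_le_div_iff₀ (hden x) (hden x₀)] at this
          linarith
        have h3 : ((2 + γ₀ x₀) / |k x₀|) * |k x| ≤ 2 + γ₀ x := by
          rw [div_mul_eq_mul_div, div_le_iff₀ (abs_pos.2 hk₀)]
          linarith
        calc |t * k x| = |t| * |k x| := abs_mul t (k x)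
          _ < _ := h1
          _ ≤ _ := h3
    have := abs_lt.1 key
    linarith [this.1]
  · field_simp
    ring
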